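/- arXiv:2504.00182 — 3 statements merged into one kernel-verified Lean document; each statement's English description precedes it below -/
import Mathlib

section
/- Let φ : ℝ → ℝ be measurable and ξ_φ(x) = (cos φ(x), sin φ(x))ᵀ. For s < t with φ integrable appropriately, define Ω(s,t) = ∫_s^t ξ_{φ(x)} ξ_{φ(x)}ᵀ dx. Then det Ω(s,t) = (1/2) ∫_s^t ∫_s^t sin²(φ(x) − φ(y)) dx dy. -/
open MeasureTheory Real

private lemma bdd_intInt {f : ℝ → ℝ} (hf : Measurable f) (C : ℝ)
    (hb : ∀ x, |f x| ≤ C) (s t : ℝ) : IntervalIntegrable f volume s t := by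
  apply IntervalIntegrable.mono_fun (intervalIntegrable_const (c := C))
    hf.aestronglyMeasurable
  filter_upwards with x
  simpa using (hb x).trans (le_abs_self C)

/-- For a rank-one Hamiltonian `H(x) = ξ_{φ(x)} ξ_{φ(x)}ᵀ` with
`ξ_φ = (cos φ, sin φ)ᵀ`, the determinant of the entrywise integral
`Ω(s,t) = ∫_s^t H(x) dx` equals
`(1/2) ∫_s^t ∫_s^t sin²(φ(x) − φ(y)) dx dy`. -/
theorem det_omega_eq_double_integral_sin_sq
    (φ : ℝ → ℝ) (hφ : Measurable φ) (s t : ℝ) (hst : s < t)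
    (Ω : ℝ → ℝ → Matrix (Fin 2) (Fin 2) ℝ)
    (hΩ : ∀ s t, Ω s t = Matrix.of fun i j =>
      ∫ x in s..t, (![Real.cos (φ x), Real.sin (φ x)] i) *
        (![Real.cos (φ x), Real.sin (φ x)] j)) :
    (Ω s t).det =
      (1 / 2) * ∫ x in s..t, ∫ y in s..t, Real.sin (φ x - φ y) ^ 2 := by
  have hcos : Measurable fun x => Real.cos (φ x) := Real.measurable_cos.comp hφ
  have hsin : Measurable fun x => Real.sin (φ x) := Real.measurable_sin.comp hφ
  have hIc2 : IntervalIntegrable (fun x => Real.cos (φ x) ^ 2) volume s t := by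
    refine bdd_intInt (hcos.pow_const 2) 1 (fun x => ?_) s t
    rw [abs_pow]
    exact pow_le_one₀ (abs_nonneg _) (Real.abs_cos_le_one _)
  have hIs2 : IntervalIntegrable (fun x => Real.sin (φ x) ^ 2) volume s t := by
    refine bdd_intInt (hsin.pow_const 2) 1 (fun x => ?_) s t
    rw [abs_pow]
    exact pow_le_one₀ (abs_nonneg _) (Real.abs_sin_le_one _)
  have hIsc : IntervalIntegrable (fun x => Real.sin (φ x) * Real.cos (φ x)) volume s t := by
    refine bdd_intInt (hsin.mul hcos) 1 (fun x => ?_) s t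
    rw [Pi.mul_apply, abs_mul]
    exact mul_le_one₀ (Real.abs_sin_le_one _) (abs_nonneg _) (Real.abs_cos_le_one _)
  set A := ∫ x in s..t, Real.cos (φ x) ^ 2 with hA
  set B := ∫ x in s..t, Real.sin (φ x) * Real.cos (φ x) with hB
  set C := ∫ x in s..t, Real.sin (φ x) ^ 2 with hC
  have inner : ∀ x, (∫ y in s..t, Real.sin (φ x - φ y) ^ 2)
      = Real.sin (φ x) ^ 2 * A - (Real.sin (φ x) * Real.cos (φ x)) * (2 * B)
        + Real.cos (φ x) ^ 2 * C := by
    intro x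
    have h1 : ∀ y, Real.sin (φ x - φ y) ^ 2
        = Real.sin (φ x) ^ 2 * Real.cos (φ y) ^ 2
          - (2 * Real.sin (φ x) * Real.cos (φ x)) * (Real.sin (φ y) * Real.cos (φ y))
          + Real.cos (φ x) ^ 2 * Real.sin (φ y) ^ 2 := by
      intro y; rw [Real.sin_sub]; ring
    simp only [h1]
    rw [intervalIntegral.integral_add, intervalIntegral.integral_sub,
        intervalIntegral.integral_const_mul, intervalIntegral.integral_const_mul,
        intervalIntegral.integral_const_mul]
    · ring
    · exact hIc2.const_mul _
    · exact hIsc.const_mul _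
    · exact (hIc2.const_mul _).sub (hIsc.const_mul _)
    · exact hIs2.const_mul _
  have e00 : (∫ x in s..t, Real.cos (φ x) * Real.cos (φ x)) = A := by
    rw [hA]; exact intervalIntegral.integral_congr fun x _ => by ring
  have e11 : (∫ x in s..t, Real.sin (φ x) * Real.sin (φ x)) = C := by
    rw [hC]; exact intervalIntegral.integral_congr fun x _ => by ring
  have e01 : (∫ x in s..t, Real.cos (φ x) * Real.sin (φ x)) = B := by
    rw [hB]; exact intervalIntegral.integral_congr fun x _ => by ring
  have lhs : (Ω s t).det = A * C - B * B := by
    rw [hΩ, Matrix.det_fin_two]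
    simp only [Matrix.of_apply, Matrix.cons_val', Matrix.cons_val_zero, Matrix.cons_val_one,
      Matrix.head_cons, Matrix.empty_val', Matrix.cons_val_fin_one, Matrix.head_fin_const]
    rw [e00, e11, e01]
  rw [lhs]
  simp only [inner]
  rw [intervalIntegral.integral_add, intervalIntegral.integral_sub,
      intervalIntegral.integral_mul_const, intervalIntegral.integral_mul_const,
      intervalIntegral.integral_mul_const, ← hA, ← hB, ← hC]
  · ring
  · exact hIs2.mul_const _
  · exact hIsc.mul_const _
  · exact (hIs2.mul_const _).sub (hIsc.mul_const _)
  · exact hIc2.mul_const _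
end

section
/- Let g : [1,∞) → (0,∞) be measurable, locally integrable, and regularly varying with index α > −1, i.e. g(λr)/g(r) → λ^α for every λ > 0 as r → ∞. Then lim_{x→∞} x·g(x) / ∫_1^x g(t) dt = α + 1. -/
set_option maxHeartbeats 1000000

open MeasureTheory Filter Set

namespace KaramataAux

noncomputable def G (g : ℝ → ℝ) : ℝ → ℝ := fun x => ∫ t in (1:ℝ)..x, g t

variable {g : ℝ → ℝ} {α : ℝ}

lemma sub_int (hint : ∀ x ≥ (1:ℝ), IntervalIntegrable g volume 1 x)
    {a b : ℝ} (ha : 1 ≤ a) (hb : 1 ≤ b) :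
    IntervalIntegrable g volume a b := by
  apply (hint (max a b) (le_max_of_le_left ha)).mono_set
  exact Set.uIcc_subset_uIcc (Set.mem_uIcc.2 (Or.inl ⟨ha, le_max_left _ _⟩))
    (Set.mem_uIcc.2 (Or.inl ⟨hb, le_max_right _ _⟩))

lemma G_sub (hint : ∀ x ≥ (1:ℝ), IntervalIntegrable g volume 1 x)
    {a b : ℝ} (ha : 1 ≤ a) (hb : 1 ≤ b) :
    G g b - G g a = ∫ t in a..b, g t := by
  have := intervalIntegral.integral_add_adjacent_intervals (hint a ha) (sub_int hint ha hb)
  simp only [G]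
  linarith

lemma G_mono (hpos : ∀ r ≥ (1:ℝ), 0 < g r)
    (hint : ∀ x ≥ (1:ℝ), IntervalIntegrable g volume 1 x)
    {a b : ℝ} (ha : 1 ≤ a) (hab : a ≤ b) :
    G g a ≤ G g b := by
  have h := G_sub hint ha (ha.trans hab)
  have : 0 ≤ ∫ t in a..b, g t := by
    apply intervalIntegral.integral_nonneg hab
    intro u hu
    exact (hpos u (ha.trans hu.1)).le
  linarith

lemma G_pos (hpos : ∀ r ≥ (1:ℝ), 0 < g r)
    (hint : ∀ x ≥ (1:ℝ), IntervalIntegrable g volume 1 x)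
    {x : ℝ} (hx : 1 < x) : 0 < G g x := by
  apply intervalIntegral.intervalIntegral_pos_of_pos_on (hint x hx.le) _ hx
  intro t ht
  exact hpos t ht.1.le

/-- substitution: `x * ∫ s in a..b, g (s * x) = G g (b*x) - G g (a*x)`. -/
lemma subst (hint : ∀ x ≥ (1:ℝ), IntervalIntegrable g volume 1 x)
    {a b x : ℝ} (ha : 1 ≤ a) (hb : 1 ≤ b) (hx : 1 ≤ x) :
    x * ∫ s in a..b, g (s * x) = G g (b * x) - G g (a * x) := by
  have hx0 : x ≠ 0 := by positivity
  rw [intervalIntegral.integral_comp_mul_right g hx0]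
  rw [G_sub hint (by nlinarith) (by nlinarith)]
  rw [smul_eq_mul, ← mul_assoc, mul_inv_cancel₀ hx0, one_mul]

/-- For `lam > 1` and `ε > 0`, increments of `G` scale by roughly `lam^(α+1)`. -/
lemma inc (hpos : ∀ r ≥ (1:ℝ), 0 < g r)
    (hint : ∀ x ≥ (1:ℝ), IntervalIntegrable g volume 1 x)
    (hrv : ∀ lam : ℝ, 0 < lam →
      Tendsto (fun r => g (lam * r) / g r) atTop (nhds (lam ^ α)))
    {lam ε : ℝ} (hlam : 1 < lam) (hε : 0 < ε) :
    ∃ T ≥ (1:ℝ), ∀ a b : ℝ, T ≤ a → a ≤ b →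
      lam * (lam ^ α - ε) * (G g b - G g a) ≤ G g (lam * b) - G g (lam * a) ∧
      G g (lam * b) - G g (lam * a) ≤ lam * (lam ^ α + ε) * (G g b - G g a) := by
  obtain ⟨N, hN⟩ := Metric.tendsto_atTop.1 (hrv lam (by linarith)) ε hε
  refine ⟨max N 1, le_max_right _ _, ?_⟩
  intro a b ha hab
  have ha1 : (1:ℝ) ≤ a := le_trans (le_max_right _ _) ha
  have hb1 : (1:ℝ) ≤ b := ha1.trans hab
  have hlam1 : (1:ℝ) ≤ lam := hlam.le
  have hlam0 : (0:ℝ) < lam := by linarith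
  have hpt : ∀ s ∈ Set.Icc a b,
      (lam ^ α - ε) * g s ≤ g (s * lam) ∧ g (s * lam) ≤ (lam ^ α + ε) * g s := by
    intro s hs
    have hs1 : (1:ℝ) ≤ s := ha1.trans hs.1
    have hgs : 0 < g s := hpos s hs1
    have hd := hN s (le_trans (le_max_left _ _) (ha.trans hs.1))
    rw [Real.dist_eq, abs_lt] at hd
    rw [mul_comm s lam]
    have hgg : g (lam * s) = g (lam * s) / g s * g s := (div_mul_cancel₀ _ hgs.ne').symm
    constructor
    · nlinarith [hd.1]
    · nlinarith [hd.2]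
  have hib : IntervalIntegrable g volume a b := sub_int hint ha1 hb1
  have hibl : IntervalIntegrable (fun s => g (s * lam)) volume a b := by
    have := (sub_int hint (by nlinarith : (1:ℝ) ≤ lam * a)
      (by nlinarith : (1:ℝ) ≤ lam * b)).comp_mul_right (c := lam)
    rwa [mul_comm lam a, mul_comm lam b, mul_div_cancel_right₀ a (by positivity : lam ≠ 0),
      mul_div_cancel_right₀ b (by positivity : lam ≠ 0)] at this
  have hsub : lam * ∫ s in a..b, g (s * lam) = G g (b * lam) - G g (a * lam) :=
    subst hint ha1 hb1 hlam1
  have hGsub : G g b - G g a = ∫ s in a..b, g s := G_sub hint ha1 hb1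
  have hlow : (lam ^ α - ε) * ∫ s in a..b, g s ≤ ∫ s in a..b, g (s * lam) := by
    rw [← intervalIntegral.integral_const_mul]
    exact intervalIntegral.integral_mono_on hab (hib.const_mul _) hibl fun s hs => (hpt s hs).1
  have hhigh : (∫ s in a..b, g (s * lam)) ≤ (lam ^ α + ε) * ∫ s in a..b, g s := by
    rw [← intervalIntegral.integral_const_mul]
    exact intervalIntegral.integral_mono_on hab hibl (hib.const_mul _) fun s hs => (hpt s hs).2
  rw [mul_comm b lam, mul_comm a lam] at hsub
  constructor
  · rw [← hsub, hGsub]; nlinarith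
  · rw [← hsub, hGsub]; nlinarith

lemma G_top (hα : -1 < α)
    (hpos : ∀ r ≥ (1:ℝ), 0 < g r)
    (hint : ∀ x ≥ (1:ℝ), IntervalIntegrable g volume 1 x)
    (hrv : ∀ lam : ℝ, 0 < lam →
      Tendsto (fun r => g (lam * r) / g r) atTop (nhds (lam ^ α))) :
    Tendsto (G g) atTop atTop := by
  have h2 : (1:ℝ) < 2 ^ (α + 1) := by
    have := Real.rpow_lt_rpow_left_iff (x := (2:ℝ)) (y := 0) (z := α+1) one_lt_two
    simp only [Real.rpow_zero] at this
    exact this.2 (by linarith)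
  set ε : ℝ := (2 ^ (α+1) - 1) / 4 with hεdef
  have hε : 0 < ε := by rw [hεdef]; linarith
  set c : ℝ := 2 * ((2:ℝ) ^ α - ε) with hcdef
  have h2a : (2:ℝ) ^ (α + 1) = 2 * 2 ^ α := by
    rw [Real.rpow_add two_pos, Real.rpow_one]; ring
  have hc : 1 < c := by rw [hcdef, hεdef]; nlinarith
  obtain ⟨T, hT1, hT⟩ := inc hpos hint hrv one_lt_two hε
  have hT0 : (0:ℝ) < T := by linarith
  have hG1 : G g 1 = 0 := intervalIntegral.integral_same
  set b : ℕ → ℝ := fun n => G g (2 ^ (n+1) * T) - G g (2 ^ n * T) with hbdef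
  have hpow : ∀ n : ℕ, T ≤ 2 ^ n * T := by
    intro n
    nlinarith [one_le_pow₀ (one_le_two (α := ℝ)) (n := n)]
  have hpow2 : ∀ n : ℕ, (2:ℝ) ^ n * T ≤ 2 ^ (n+1) * T := by
    intro n
    have : (2:ℝ) ^ n ≤ 2 ^ (n+1) := by
      apply pow_le_pow_right₀ one_le_two (Nat.le_succ n)
    nlinarith
  have hGnn : ∀ n : ℕ, 0 ≤ G g (2 ^ n * T) := by
    intro n
    have := G_mono hpos hint le_rfl (le_trans hT1 (hpow n))
    rw [hG1] at this; exact this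
  have hbnn : ∀ n, 0 ≤ b n := by
    intro n
    have := G_mono hpos hint (le_trans hT1 (hpow n)) (hpow2 n)
    simp only [hbdef]; linarith
  have hb : ∀ n, c ^ n * b 0 ≤ b n := by
    intro n
    induction n with
    | zero => simp
    | succ n ih =>
      have key := (hT (2 ^ n * T) (2 ^ (n+1) * T) (hpow n) (hpow2 n)).1
      have e1 : 2 * (2 ^ n * T) = 2 ^ (n+1) * T := by ring
      have e2 : 2 * (2 ^ (n+1) * T) = 2 ^ (n+1+1) * T := by ring
      rw [e1, e2] at key
      calc c ^ (n+1) * b 0 = c * (c ^ n * b 0) := by ring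
        _ ≤ c * b n := mul_le_mul_of_nonneg_left ih (by linarith)
        _ ≤ b (n+1) := by simp only [hbdef, hcdef]; linarith
  have hb0pos : 0 < b 0 := by
    have hineq : T < 2 ^ (0+1) * T := by
      have h : (2:ℝ)^(0+1) = 2 := by norm_num
      rw [h]; linarith
    have hpint : 0 < ∫ t in T..(2^(0+1)*T), g t := by
      apply intervalIntegral.intervalIntegral_pos_of_pos_on
        (sub_int hint hT1 (le_trans hT1 (hpow 1)))
        (fun t ht => hpos t (by linarith [ht.1])) hineq
    have hgs := G_sub hint hT1 (le_trans hT1 (hpow 1))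
    simp only [hbdef, pow_zero, one_mul]
    linarith
  rw [tendsto_atTop]
  intro M
  have hc' : Tendsto (fun n : ℕ => c ^ n * b 0) atTop atTop :=
    (tendsto_pow_atTop_atTop_of_one_lt hc).atTop_mul_const hb0pos
  obtain ⟨n, hn⟩ := (tendsto_atTop.1 hc' M).exists
  rw [eventually_atTop]
  refine ⟨2 ^ (n+1) * T, fun x hx => ?_⟩
  have h1 : G g (2^(n+1)*T) ≤ G g x :=
    G_mono hpos hint (le_trans hT1 (hpow (n+1))) hx
  have h2' : b n ≤ G g (2^(n+1)*T) := by
    have := hGnn n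
    simp only [hbdef]; linarith
  linarith [hb n]

lemma G_rv_gt (hα : -1 < α)
    (hpos : ∀ r ≥ (1:ℝ), 0 < g r)
    (hint : ∀ x ≥ (1:ℝ), IntervalIntegrable g volume 1 x)
    (hrv : ∀ lam : ℝ, 0 < lam →
      Tendsto (fun r => g (lam * r) / g r) atTop (nhds (lam ^ α)))
    {lam : ℝ} (hlam : 1 < lam) :
    Tendsto (fun x => G g (lam * x) / G g x) atTop (nhds (lam ^ (α + 1))) := by
  have hlam0 : (0:ℝ) < lam := by linarith
  set L : ℝ := lam ^ (α + 1) with hLdef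
  have hLa : lam * lam ^ α = L := by
    rw [hLdef, Real.rpow_add hlam0, Real.rpow_one]; ring
  have hlamα : (0:ℝ) < lam ^ α := Real.rpow_pos_of_pos hlam0 α
  have hL0 : 0 < L := Real.rpow_pos_of_pos hlam0 _
  rw [Metric.tendsto_atTop]
  intro δ hδ
  set ε : ℝ := min (δ/(4*lam)) (lam^α/2) with hεdef
  have hε : 0 < ε := lt_min (by positivity) (by positivity)
  have hε1 : lam * ε ≤ δ/4 := by
    have hεle : ε ≤ δ/(4*lam) := min_le_left _ _
    calc lam * ε ≤ lam * (δ/(4*lam)) := mul_le_mul_of_nonneg_left hεle hlam0.le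
      _ = δ/4 := by field_simp
  have hε2 : ε ≤ lam^α/2 := min_le_right _ _
  obtain ⟨T, hT1, hT⟩ := inc hpos hint hrv hlam hε
  have hG1 : G g 1 = 0 := intervalIntegral.integral_same
  have hE0 : 0 ≤ G g T := by
    have h := G_mono hpos hint le_rfl hT1
    linarith [hG1 ▸ h]
  have hD0 : 0 ≤ G g (lam * T) := by
    have h := G_mono hpos hint le_rfl (by nlinarith : (1:ℝ) ≤ lam * T)
    linarith [hG1 ▸ h]
  set D := G g (lam * T)
  set E := G g T
  set K : ℝ := max (4*D/δ) ((4*(L+1)/δ)*E) with hKdef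
  have hev1 : ∀ᶠ x in atTop, max T 2 ≤ x := eventually_ge_atTop _
  have hev2 : ∀ᶠ x in atTop, K ≤ G g x :=
    (tendsto_atTop.1 (G_top hα hpos hint hrv)) K
  rw [← eventually_atTop]
  filter_upwards [hev1, hev2] with x hx1 hx2
  have hxT : T ≤ x := le_trans (le_max_left _ _) hx1
  have hx2' : (2:ℝ) ≤ x := le_trans (le_max_right _ _) hx1
  have hA0 : 0 < G g x := G_pos hpos hint (by linarith)
  set A := G g x
  set B := G g (lam * x)
  have hkey := hT T x le_rfl hxT
  have hEA : E ≤ A := G_mono hpos hint hT1 hxT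
  have hDbound : D ≤ δ/4 * A := by
    have h1 : 4*D/δ ≤ K := le_max_left _ _
    have h2 : 4*D/δ ≤ A := le_trans h1 hx2
    calc D = δ/4 * (4*D/δ) := by field_simp
      _ ≤ δ/4 * A := by nlinarith
  have hEbound : (L+1) * E ≤ δ/4 * A := by
    have h1 : (4*(L+1)/δ)*E ≤ K := le_max_right _ _
    have h2 : (4*(L+1)/δ)*E ≤ A := le_trans h1 hx2
    have heq : (L+1)*E = δ/4 * ((4*(L+1)/δ)*E) := by field_simp
    rw [heq]
    nlinarith
  rw [Real.dist_eq, abs_lt]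
  have hcm : lam * (lam ^ α - ε) = L - lam * ε := by rw [← hLa]; ring
  have hcp : lam * (lam ^ α + ε) = L + lam * ε := by rw [← hLa]; ring
  have h1 : (L - lam * ε) * (A - E) ≤ B - D := by rw [← hcm]; exact hkey.1
  have h2 : B - D ≤ (L + lam * ε) * (A - E) := by rw [← hcp]; exact hkey.2
  have hεp : 0 < lam * ε := by positivity
  have hp1 : 0 ≤ (L + lam * ε) * E := mul_nonneg (by positivity) hE0
  have hp2 : 0 ≤ (lam * ε) * E := mul_nonneg (by positivity) hE0
  have hp3 : 0 ≤ (δ/4 - lam * ε) * A := mul_nonneg (by linarith) hA0.le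
  have q1 : (L - δ/4) * A ≤ (L - lam * ε) * A := mul_le_mul_of_nonneg_right (by linarith) hA0.le
  have q2 : (L - lam * ε) * E ≤ (L + 1) * E := mul_le_mul_of_nonneg_right (by linarith) hE0
  have q3 : 0 < δ/2 * A := by positivity
  have q4 : 0 < δ/4 * A := by positivity
  have e1 : (L - lam * ε) * (A - E) = (L - lam * ε) * A - (L - lam * ε) * E := by ring
  have e2 : (L - δ/2) * A = (L - δ) * A + δ/2 * A := by ring
  have e3 : (L - δ/2) * A = (L - δ/4) * A - δ/4 * A := by ring
  have hlow : (L - δ) * A < B := by linarith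
  have r1 : (L + lam * ε) * A ≤ (L + δ/4) * A := mul_le_mul_of_nonneg_right (by linarith) hA0.le
  have e4 : (L + lam * ε) * (A - E) = (L + lam * ε) * A - (L + lam * ε) * E := by ring
  have e5 : (L + δ) * A = (L + δ/4) * A + δ/4 * A + δ/2 * A := by ring
  have hhigh : B < (L + δ) * A := by linarith
  constructor
  · have : L - δ < B / A := by rw [lt_div_iff₀ hA0]; exact hlow
    linarith
  · have : B / A < L + δ := by rw [div_lt_iff₀ hA0]; exact hhigh
    linarith

lemma G_rv (hα : -1 < α)
    (hpos : ∀ r ≥ (1:ℝ), 0 < g r)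
    (hint : ∀ x ≥ (1:ℝ), IntervalIntegrable g volume 1 x)
    (hrv : ∀ lam : ℝ, 0 < lam →
      Tendsto (fun r => g (lam * r) / g r) atTop (nhds (lam ^ α)))
    {lam : ℝ} (hlam : 0 < lam) :
    Tendsto (fun x => G g (lam * x) / G g x) atTop (nhds (lam ^ (α + 1))) := by
  rcases lt_trichotomy lam 1 with h | h | h
  · have hμ : 1 < lam⁻¹ := one_lt_inv_iff₀.2 ⟨hlam, h⟩
    have hcomp : Tendsto (fun x => G g x / G g (lam * x)) atTop (nhds ((lam⁻¹) ^ (α+1))) := by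
      have h2 := (G_rv_gt hα hpos hint hrv hμ).comp
        (tendsto_id.const_mul_atTop hlam : Tendsto (fun x : ℝ => lam * x) atTop atTop)
      apply h2.congr
      intro x
      simp only [Function.comp_apply, id]
      rw [show lam⁻¹ * (lam * x) = x by field_simp]
    have hne : ((lam:ℝ)⁻¹) ^ (α+1) ≠ 0 := (Real.rpow_pos_of_pos (by positivity) _).ne'
    have hinv := hcomp.inv₀ hne
    have heq : (((lam:ℝ)⁻¹) ^ (α+1))⁻¹ = lam ^ (α+1) := by
      rw [Real.inv_rpow hlam.le, inv_inv]
    rw [heq] at hinv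
    apply hinv.congr'
    filter_upwards [eventually_ge_atTop (max 2 (2/lam))] with x hx
    rw [inv_div]
  · subst h
    have hev : ∀ᶠ x in atTop, G g (1 * x) / G g x = 1 := by
      filter_upwards [eventually_ge_atTop (2:ℝ)] with x hx
      rw [one_mul, div_self (G_pos hpos hint (by linarith)).ne']
    rw [Real.one_rpow]
    exact Tendsto.congr' (hev.mono fun x hx => hx.symm) tendsto_const_nhds
  · exact G_rv_gt hα hpos hint hrv h


lemma slope_rpow (L : ℝ) :
    Tendsto (fun lam : ℝ => (lam ^ L - 1) / (lam - 1)) (nhdsWithin 1 (Set.Ioi 1)) (nhds L) := by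
  have h : HasDerivAt (fun x : ℝ => x ^ L) (L * (1:ℝ) ^ (L - 1)) 1 :=
    Real.hasDerivAt_rpow_const (Or.inl one_ne_zero)
  rw [Real.one_rpow, mul_one] at h
  have h2 := hasDerivAt_iff_tendsto_slope.1 h
  have h3 := h2.mono_left (nhdsWithin_mono (1:ℝ) (fun x hx => ne_of_gt hx))
  apply h3.congr
  intro x
  rw [slope_def_field, Real.one_rpow]

lemma slope_rpow_neg {L : ℝ} :
    Tendsto (fun lam : ℝ => (1 - lam ^ (-L)) / (lam - 1)) (nhdsWithin 1 (Set.Ioi 1)) (nhds L) := by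
  have h : HasDerivAt (fun x : ℝ => x ^ (-L)) (-L * (1:ℝ) ^ (-L - 1)) 1 :=
    Real.hasDerivAt_rpow_const (Or.inl one_ne_zero)
  rw [Real.one_rpow, mul_one] at h
  have h2 := hasDerivAt_iff_tendsto_slope.1 h
  have h3 := h2.mono_left (nhdsWithin_mono (1:ℝ) (fun x hx => ne_of_gt hx))
  have h4 := h3.neg
  rw [neg_neg] at h4
  apply h4.congr
  intro x
  rw [slope_def_field, Real.one_rpow]
  ring

lemma le_of_rpow_bound {L c : ℝ} (hc : 0 ≤ c)
    (h : ∀ lam : ℝ, 1 < lam → c * Real.log lam ≤ lam ^ L - 1) : c ≤ L := by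
  have hev : ∀ᶠ lam in nhdsWithin (1:ℝ) (Set.Ioi 1),
      c / lam ≤ (lam ^ L - 1) / (lam - 1) := by
    filter_upwards [self_mem_nhdsWithin] with lam (hlam : 1 < lam)
    have hlam0 : (0:ℝ) < lam := by linarith
    have hlog : (lam - 1)/lam ≤ Real.log lam := by
      have := Real.one_sub_inv_le_log_of_pos hlam0
      have he : 1 - lam⁻¹ = (lam - 1)/lam := by field_simp
      linarith [he ▸ this]
    have h1 : c * ((lam - 1)/lam) ≤ lam ^ L - 1 :=
      le_trans (mul_le_mul_of_nonneg_left hlog hc) (h lam hlam)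
    rw [div_le_div_iff₀ hlam0 (by linarith : (0:ℝ) < lam - 1)]
    calc c * (lam - 1) = c * ((lam - 1)/lam) * lam := by field_simp
      _ ≤ (lam ^ L - 1) * lam := by
          apply mul_le_mul_of_nonneg_right h1 hlam0.le
  have ht1 : Tendsto (fun lam : ℝ => c / lam) (nhdsWithin 1 (Set.Ioi 1)) (nhds c) := by
    have : Tendsto (fun lam : ℝ => c / lam) (nhds 1) (nhds (c / 1)) :=
      (tendsto_const_nhds.div tendsto_id one_ne_zero)
    rw [div_one] at this
    exact this.mono_left nhdsWithin_le_nhds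
  exact le_of_tendsto_of_tendsto ht1 (slope_rpow L) hev

lemma ge_of_rpow_bound {L c : ℝ} (hc : 0 ≤ c)
    (h : ∀ lam : ℝ, 1 < lam → 1 - lam ^ (-L) ≤ c * Real.log lam) : L ≤ c := by
  have hev : ∀ᶠ lam in nhdsWithin (1:ℝ) (Set.Ioi 1),
      (1 - lam ^ (-L)) / (lam - 1) ≤ c := by
    filter_upwards [self_mem_nhdsWithin] with lam (hlam : 1 < lam)
    have hlam0 : (0:ℝ) < lam := by linarith
    have hlog : Real.log lam ≤ lam - 1 := Real.log_le_sub_one_of_pos hlam0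
    have h1 : 1 - lam ^ (-L) ≤ c * (lam - 1) :=
      le_trans (h lam hlam) (mul_le_mul_of_nonneg_left hlog hc)
    rw [div_le_iff₀ (by linarith : (0:ℝ) < lam - 1)]
    linarith [h1]
  exact le_of_tendsto slope_rpow_neg hev

/-- extract a sequence tending to infinity along which a frequently-true predicate holds. -/
lemma exists_seq {p : ℝ → Prop} (h : ∃ᶠ x in atTop, p x) :
    ∃ u : ℕ → ℝ, Tendsto u atTop atTop ∧ (∀ n, p (u n)) ∧ (∀ n : ℕ, (n:ℝ) ≤ u n) := by
  have h' := frequently_atTop.1 h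
  choose u hu hp using fun n : ℕ => h' (n : ℝ)
  exact ⟨u, tendsto_atTop_mono hu tendsto_natCast_atTop_atTop, hp, hu⟩

/-- the ratio `R (s x) / R x` tends to `1`, where `R x = x g x / G x`. -/
lemma R_ratio (hα : -1 < α)
    (hpos : ∀ r ≥ (1:ℝ), 0 < g r)
    (hint : ∀ x ≥ (1:ℝ), IntervalIntegrable g volume 1 x)
    (hrv : ∀ lam : ℝ, 0 < lam →
      Tendsto (fun r => g (lam * r) / g r) atTop (nhds (lam ^ α)))
    {s : ℝ} (hs : 1 ≤ s) :
    Tendsto (fun x => ((s * x) * g (s * x) / G g (s * x)) / (x * g x / G g x))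
      atTop (nhds 1) := by
  have hs0 : (0:ℝ) < s := by linarith
  have h1 : Tendsto (fun x => g (s * x) / g x) atTop (nhds (s ^ α)) := hrv s hs0
  have hGne : (s:ℝ) ^ (α+1) ≠ 0 := (Real.rpow_pos_of_pos hs0 _).ne'
  have h2 : Tendsto (fun x => G g x / G g (s * x)) atTop (nhds ((s ^ (α+1))⁻¹)) := by
    have := (G_rv hα hpos hint hrv hs0).inv₀ hGne
    exact this.congr fun x => inv_div _ _
  have h3 := (h1.const_mul s).mul h2
  have hval : s * s ^ α * (s ^ (α+1))⁻¹ = 1 := by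
    have he : s * s ^ α = s ^ (α+1) := by
      nth_rewrite 1 [← Real.rpow_one s]
      rw [← Real.rpow_add hs0]
      ring_nf
    rw [he, mul_inv_cancel₀ hGne]
  rw [hval] at h3
  apply h3.congr'
  filter_upwards [eventually_ge_atTop (2:ℝ)] with x hx
  have hgx : 0 < g x := hpos x (by linarith)
  have hGx : 0 < G g x := G_pos hpos hint (by linarith)
  have hGsx : 0 < G g (s * x) := G_pos hpos hint (by nlinarith)
  have hx0 : x ≠ 0 := by positivity
  field_simp


/-- value of the key lintegral. -/
lemma lint_val (hpos : ∀ r ≥ (1:ℝ), 0 < g r)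
    (hint : ∀ x ≥ (1:ℝ), IntervalIntegrable g volume 1 x)
    {lam x C : ℝ} (hlam : 1 < lam) (hx : 2 ≤ x) (hC : 0 < C) :
    ∫⁻ s in Set.Ioc 1 lam, ENNReal.ofReal (x * g (s * x) / C) =
      ENNReal.ofReal ((G g (lam * x) - G g x) / C) := by
  have hx1 : (1:ℝ) ≤ x := by linarith
  have hx0 : x ≠ 0 := by positivity
  have hgint : IntervalIntegrable (fun s => g (s * x)) volume 1 lam := by
    have := (sub_int hint hx1 (by nlinarith : (1:ℝ) ≤ lam * x)).comp_mul_right (c := x)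
    rwa [div_self hx0, mul_div_assoc, div_self hx0, mul_one] at this
  have hfeq : (fun s => x * g (s * x) / C) = fun s => (x / C) * g (s * x) := by
    funext s; ring
  have hInt : IntegrableOn (fun s => x * g (s * x) / C) (Set.Ioc 1 lam) volume := by
    rw [hfeq]
    exact (intervalIntegrable_iff_integrableOn_Ioc_of_le hlam.le).1 (hgint.const_mul _)
  have hnn : 0 ≤ᵐ[volume.restrict (Set.Ioc 1 lam)] fun s => x * g (s * x) / C := by
    rw [EventuallyLE, ae_restrict_iff' measurableSet_Ioc]
    apply ae_of_all
    intro s hs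
    have : 0 < g (s * x) := hpos _ (by nlinarith [hs.1])
    positivity
  rw [← ofReal_integral_eq_lintegral_ofReal hInt hnn]
  congr 1
  rw [← intervalIntegral.integral_of_le hlam.le, hfeq,
    intervalIntegral.integral_const_mul]
  have hsubst : x * ∫ s in (1:ℝ)..lam, g (s * x) = G g (lam * x) - G g (1 * x) :=
    subst hint le_rfl hlam.le hx1
  rw [one_mul] at hsubst
  rw [div_mul_eq_mul_div, hsubst]

/-- convergence of the normalized increments. -/
lemma I_tendsto (hα : -1 < α)
    (hpos : ∀ r ≥ (1:ℝ), 0 < g r)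
    (hint : ∀ x ≥ (1:ℝ), IntervalIntegrable g volume 1 x)
    (hrv : ∀ lam : ℝ, 0 < lam →
      Tendsto (fun r => g (lam * r) / g r) atTop (nhds (lam ^ α)))
    {lam : ℝ} (hlam : 1 < lam) {u : ℕ → ℝ} (hu : Tendsto u atTop atTop)
    (hu2 : ∀ n, 2 ≤ u n) :
    Tendsto (fun n => (G g (lam * u n) - G g (u n)) / G g (u n)) atTop
      (nhds (lam ^ (α+1) - 1)) := by
  have h1 := ((G_rv hα hpos hint hrv (by linarith : (0:ℝ) < lam)).comp hu).sub
    (tendsto_const_nhds (x := (1:ℝ)))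
  apply h1.congr
  intro n
  have hGu : 0 < G g (u n) := G_pos hpos hint (by linarith [hu2 n])
  simp only [Function.comp_apply]
  field_simp

/-- the same with normalization by `G g (lam * u n)`. -/
lemma I_tendsto' (hα : -1 < α)
    (hpos : ∀ r ≥ (1:ℝ), 0 < g r)
    (hint : ∀ x ≥ (1:ℝ), IntervalIntegrable g volume 1 x)
    (hrv : ∀ lam : ℝ, 0 < lam →
      Tendsto (fun r => g (lam * r) / g r) atTop (nhds (lam ^ α)))
    {lam : ℝ} (hlam : 1 < lam) {u : ℕ → ℝ} (hu : Tendsto u atTop atTop)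
    (hu2 : ∀ n, 2 ≤ u n) :
    Tendsto (fun n => (G g (lam * u n) - G g (u n)) / G g (lam * u n)) atTop
      (nhds (1 - lam ^ (-(α+1)))) := by
  have hlam0 : (0:ℝ) < lam := by linarith
  have hne : (lam:ℝ) ^ (α+1) ≠ 0 := (Real.rpow_pos_of_pos hlam0 _).ne'
  have h0 : Tendsto (fun x => G g x / G g (lam * x)) atTop (nhds ((lam ^ (α+1))⁻¹)) := by
    have := (G_rv hα hpos hint hrv hlam0).inv₀ hne
    exact this.congr fun x => inv_div _ _
  have h1 := (tendsto_const_nhds (x := (1:ℝ))).sub (h0.comp hu)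
  have heq : 1 - (lam ^ (α+1))⁻¹ = 1 - lam ^ (-(α+1)) := by
    rw [Real.rpow_neg hlam0.le]
  rw [heq] at h1
  apply h1.congr
  intro n
  have hGu : 0 < G g (lam * u n) := G_pos hpos hint (by nlinarith [hu2 n])
  simp only [Function.comp_apply]
  field_simp


/-- Step A: eventual upper bound for `R`. -/
lemma stepA (hα : -1 < α)
    (hpos : ∀ r ≥ (1:ℝ), 0 < g r)
    (hmeas : Measurable g)
    (hint : ∀ x ≥ (1:ℝ), IntervalIntegrable g volume 1 x)
    (hrv : ∀ lam : ℝ, 0 < lam →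
      Tendsto (fun r => g (lam * r) / g r) atTop (nhds (lam ^ α)))
    {ε : ℝ} (hε : 0 < ε) :
    ∀ᶠ x in atTop, x * g x / G g x < (α + 1) + ε := by
  set L : ℝ := α + 1 with hLdef
  have hL0 : 0 < L := by rw [hLdef]; linarith
  by_contra hcon
  have hfreq : ∃ᶠ x in atTop, (L + ε ≤ x * g x / G g x ∧ 2 ≤ x) := by
    rw [not_eventually] at hcon
    exact (hcon.mono fun x hx => not_lt.1 hx).and_eventually (eventually_ge_atTop 2)
  obtain ⟨u, hu, hup, -⟩ := exists_seq hfreq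
  have hu2 : ∀ n, 2 ≤ u n := fun n => (hup n).2
  have hRu : ∀ n, L + ε ≤ u n * g (u n) / G g (u n) := fun n => (hup n).1
  have key : ∀ lam : ℝ, 1 < lam → (L + ε/2) * Real.log lam ≤ lam ^ L - 1 := by
    intro lam hlam
    set F : ℕ → ℝ → ENNReal := fun n s => ENNReal.ofReal (u n * g (s * u n) / G g (u n))
      with hFdef
    have hFmeas : ∀ n, Measurable (F n) := by
      intro n
      apply Measurable.ennreal_ofReal
      exact ((hmeas.comp (measurable_id.mul_const (u n))).const_mul (u n)).div_const _
    -- pointwise liminf lower bound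
    have hpt : ∀ s ∈ Set.Ioc (1:ℝ) lam,
        ENNReal.ofReal ((L + ε/2)/s) ≤ Filter.liminf (fun n => F n s) atTop := by
      intro s hs
      have hs1 : (1:ℝ) < s := hs.1
      have hratio := (R_ratio hα hpos hint hrv hs1.le).comp hu
      have hfrac : (L + ε/2)/(L + ε) < 1 := by
        rw [div_lt_one (by linarith)]; linarith
      have hev := hratio.eventually_const_le hfrac
      have hevF : ∀ᶠ n in atTop,
          ENNReal.ofReal ((L + ε/2)/s) ≤ F n s := by
        filter_upwards [hev] with n hn
        apply ENNReal.ofReal_le_ofReal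
        have hun2 := hu2 n
        have hu0 : (0:ℝ) < u n := by linarith
        have hsu : (2:ℝ) ≤ s * u n := by nlinarith
        have hGu : 0 < G g (u n) := G_pos hpos hint (by linarith)
        have hGsu : 0 < G g (s * u n) := G_pos hpos hint (by linarith)
        have hgu : 0 < g (u n) := hpos _ (by linarith)
        have hgsu : 0 < g (s * u n) := hpos _ (by linarith)
        have hRpos : (0:ℝ) < u n * g (u n) / G g (u n) := by positivity
        have h1 : (L + ε/2)/(L + ε) * (L + ε) ≤
            ((s * u n) * g (s * u n) / G g (s * u n)) / (u n * g (u n) / G g (u n)) *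
              (u n * g (u n) / G g (u n)) := by
          apply mul_le_mul hn (hRu n) (by linarith) ?_
          have : (0:ℝ) < (L + ε/2)/(L+ε) := by positivity
          linarith [le_trans this.le hn]
        rw [div_mul_cancel₀ _ hRpos.ne'] at h1
        rw [div_mul_cancel₀ _ (by linarith : L + ε ≠ 0)] at h1
        -- now h1 : L + ε/2 ≤ R (s * u n)
        have h2 : (L + ε/2)/s ≤ (s * u n) * g (s * u n) / G g (s * u n) / s :=
          (div_le_div_iff_of_pos_right (by linarith : (0:ℝ) < s)).2 h1
        have h3 : (s * u n) * g (s * u n) / G g (s * u n) / s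
            = u n * g (s * u n) / G g (s * u n) := by
          field_simp
        have h4 : u n * g (s * u n) / G g (s * u n) ≤ u n * g (s * u n) / G g (u n) := by
          apply (div_le_div_iff_of_pos_left (by positivity) hGsu hGu).2
          exact G_mono hpos hint (by linarith) (by nlinarith)
        calc (L + ε/2)/s ≤ _ := h2
          _ = _ := h3
          _ ≤ _ := h4
      calc ENNReal.ofReal ((L + ε/2)/s)
          = Filter.liminf (fun _ : ℕ => ENNReal.ofReal ((L + ε/2)/s)) atTop :=
            (Filter.liminf_const _).symm
        _ ≤ Filter.liminf (fun n => F n s) atTop := Filter.liminf_le_liminf hevF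
    -- assemble via Fatou
    have hFatou := MeasureTheory.lintegral_liminf_le (μ := volume.restrict (Set.Ioc 1 lam)) (u := atTop)
      hFmeas
    have hmono : ∫⁻ s in Set.Ioc 1 lam, ENNReal.ofReal ((L + ε/2)/s) ≤
        ∫⁻ s in Set.Ioc 1 lam, Filter.liminf (fun n => F n s) atTop := by
      apply lintegral_mono_ae
      rw [ae_restrict_iff' measurableSet_Ioc]
      exact ae_of_all _ hpt
    have hvalue : ∀ n, ∫⁻ s in Set.Ioc 1 lam, F n s =
        ENNReal.ofReal ((G g (lam * u n) - G g (u n)) / G g (u n)) := fun n =>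
      lint_val hpos hint hlam (hu2 n) (G_pos hpos hint (by linarith [hu2 n]))
    have hlimI : Filter.liminf (fun n => ∫⁻ s in Set.Ioc 1 lam, F n s) atTop =
        ENNReal.ofReal (lam ^ L - 1) := by
      have ht : Tendsto (fun n => ∫⁻ s in Set.Ioc 1 lam, F n s) atTop
          (nhds (ENNReal.ofReal (lam ^ L - 1))) := by
        rw [funext hvalue]
        exact (ENNReal.continuous_ofReal.tendsto _).comp
          (I_tendsto hα hpos hint hrv hlam hu hu2)
      exact ht.liminf_eq
    -- lower value
    have hlower : ∫⁻ s in Set.Ioc 1 lam, ENNReal.ofReal ((L + ε/2)/s) =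
        ENNReal.ofReal ((L + ε/2) * Real.log lam) := by
      have hcont : ContinuousOn (fun s : ℝ => (L + ε/2)/s) (Set.uIcc 1 lam) := by
        apply ContinuousOn.div continuousOn_const continuousOn_id
        intro x hx
        rw [Set.uIcc_of_le hlam.le] at hx
        simp only [id_eq]
        exact ne_of_gt (by linarith [hx.1])
      have hIone' : IntegrableOn (fun s : ℝ => (L + ε/2)/s) (Set.Ioc 1 lam) volume :=
        (intervalIntegrable_iff_integrableOn_Ioc_of_le hlam.le).1 hcont.intervalIntegrable
      have hnn' : 0 ≤ᵐ[volume.restrict (Set.Ioc 1 lam)] fun s : ℝ => (L + ε/2)/s := by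
        rw [EventuallyLE, ae_restrict_iff' measurableSet_Ioc]
        apply ae_of_all
        intro s hs
        have hs0 : (0:ℝ) < s := by linarith [hs.1]
        positivity
      rw [← ofReal_integral_eq_lintegral_ofReal hIone' hnn']
      congr 1
      rw [← intervalIntegral.integral_of_le hlam.le]
      have hEq : Set.EqOn (fun s : ℝ => (L + ε/2)/s) (fun s : ℝ => (L + ε/2) * (1/s))
          (Set.uIcc 1 lam) := fun s _ => by ring
      rw [intervalIntegral.integral_congr hEq, intervalIntegral.integral_const_mul,
        integral_one_div (by
          rw [Set.uIcc_of_le hlam.le]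
          intro hmem
          linarith [hmem.1]), div_one]
    have hchain : ENNReal.ofReal ((L + ε/2) * Real.log lam) ≤
        ENNReal.ofReal (lam ^ L - 1) := by
      rw [← hlower, ← hlimI]
      exact le_trans hmono hFatou
    have hrpow1 : (1:ℝ) ≤ lam ^ L := by
      have := Real.rpow_le_rpow_left_iff (x := lam) (y := 0) (z := L) hlam
      rw [Real.rpow_zero] at this
      exact this.2 hL0.le
    rw [ENNReal.ofReal_le_ofReal_iff (by linarith)] at hchain
    exact hchain
  have := le_of_rpow_bound (by linarith : (0:ℝ) ≤ L + ε/2) key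
  linarith


/-- real-integral version of `lint_val`. -/
lemma int_val (hpos : ∀ r ≥ (1:ℝ), 0 < g r)
    (hint : ∀ x ≥ (1:ℝ), IntervalIntegrable g volume 1 x)
    {lam x C : ℝ} (hlam : 1 < lam) (hx : 2 ≤ x) (hC : 0 < C) :
    IntegrableOn (fun s => x * g (s * x) / C) (Set.Ioc 1 lam) volume ∧
    ∫ s in Set.Ioc 1 lam, x * g (s * x) / C = (G g (lam * x) - G g x) / C := by
  have hx1 : (1:ℝ) ≤ x := by linarith
  have hx0 : x ≠ 0 := by positivity
  have hgint : IntervalIntegrable (fun s => g (s * x)) volume 1 lam := by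
    have := (sub_int hint hx1 (by nlinarith : (1:ℝ) ≤ lam * x)).comp_mul_right (c := x)
    rwa [div_self hx0, mul_div_assoc, div_self hx0, mul_one] at this
  have hfeq : (fun s => x * g (s * x) / C) = fun s => (x / C) * g (s * x) := by
    funext s; ring
  have hInt : IntegrableOn (fun s => x * g (s * x) / C) (Set.Ioc 1 lam) volume := by
    rw [hfeq]
    exact (intervalIntegrable_iff_integrableOn_Ioc_of_le hlam.le).1 (hgint.const_mul _)
  refine ⟨hInt, ?_⟩
  rw [← intervalIntegral.integral_of_le hlam.le, hfeq,
    intervalIntegral.integral_const_mul]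
  have hsubst : x * ∫ s in (1:ℝ)..lam, g (s * x) = G g (lam * x) - G g (1 * x) :=
    subst hint le_rfl hlam.le hx1
  rw [one_mul] at hsubst
  rw [div_mul_eq_mul_div, hsubst]

/-- Step B: eventual lower bound for `R`. -/
lemma stepB (hα : -1 < α)
    (hpos : ∀ r ≥ (1:ℝ), 0 < g r)
    (hmeas : Measurable g)
    (hint : ∀ x ≥ (1:ℝ), IntervalIntegrable g volume 1 x)
    (hrv : ∀ lam : ℝ, 0 < lam →
      Tendsto (fun r => g (lam * r) / g r) atTop (nhds (lam ^ α)))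
    {ε : ℝ} (hε : 0 < ε) :
    ∀ᶠ x in atTop, (α + 1) - ε < x * g x / G g x := by
  set L : ℝ := α + 1 with hLdef
  have hL0 : 0 < L := by rw [hLdef]; linarith
  by_contra hcon
  have hfreq : ∃ᶠ x in atTop, (x * g x / G g x ≤ L - ε ∧ 2 ≤ x) := by
    rw [not_eventually] at hcon
    exact (hcon.mono fun x hx => not_lt.1 hx).and_eventually (eventually_ge_atTop 2)
  obtain ⟨u, hu, hup, -⟩ := exists_seq hfreq
  have hu2 : ∀ n, 2 ≤ u n := fun n => (hup n).2
  have hRu : ∀ n, u n * g (u n) / G g (u n) ≤ L - ε := fun n => (hup n).1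
  have hR0 : ∀ n, 0 < u n * g (u n) / G g (u n) := by
    intro n
    have h2 := hu2 n
    have := hpos (u n) (by linarith)
    have := G_pos hpos hint (show (1:ℝ) < u n by linarith)
    positivity
  have hεL : 0 < L - ε := lt_of_lt_of_le (hR0 0) (hRu 0)
  set c' : ℝ := L - ε/2 with hc'def
  have hc'0 : 0 < c' := by rw [hc'def]; linarith
  set M : ℝ := L + 1 with hMdef
  have hM0 : 0 < M := by rw [hMdef]; linarith
  obtain ⟨T₀, hT₀⟩ := eventually_atTop.1 (stepA hα hpos hmeas hint hrv one_pos)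
  have key : ∀ lam : ℝ, 1 < lam → 1 - lam ^ (-L) ≤ c' * Real.log lam := by
    intro lam hlam
    have hlam0 : (0:ℝ) < lam := by linarith
    set F : ℕ → ℝ → ENNReal :=
      fun n s => ENNReal.ofReal (M - u n * g (s * u n) / G g (lam * u n)) with hFdef
    have hFmeas : ∀ n, Measurable (F n) := by
      intro n
      apply Measurable.ennreal_ofReal
      exact measurable_const.sub
        (((hmeas.comp (measurable_id.mul_const (u n))).const_mul (u n)).div_const _)
    -- the pointwise bound, eventually in n, for fixed s
    have hptev : ∀ s ∈ Set.Ioc (1:ℝ) lam, ∀ᶠ n in atTop,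
        u n * g (s * u n) / G g (lam * u n) ≤ c' / s := by
      intro s hs
      have hs1 : (1:ℝ) < s := hs.1
      have hratio := (R_ratio hα hpos hint hrv hs1.le).comp hu
      have hfrac : (1:ℝ) < c' / (L - ε) := by
        rw [lt_div_iff₀ hεL]; rw [hc'def]; linarith
      have hev := hratio.eventually_le_const hfrac
      filter_upwards [hev] with n hn
      have hun2 := hu2 n
      have hu0 : (0:ℝ) < u n := by linarith
      have hsu : (2:ℝ) ≤ s * u n := by nlinarith
      have hGu : 0 < G g (u n) := G_pos hpos hint (by linarith)
      have hGsu : 0 < G g (s * u n) := G_pos hpos hint (by linarith)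
      have hGlu : 0 < G g (lam * u n) := G_pos hpos hint (by nlinarith)
      have hgu : 0 < g (u n) := hpos _ (by linarith)
      have hgsu : 0 < g (s * u n) := hpos _ (by linarith)
      have hRpos : (0:ℝ) < u n * g (u n) / G g (u n) := by positivity
      -- R (s u n) ≤ (c'/(L-ε)) * (L-ε) = c'
      have h1 : ((s * u n) * g (s * u n) / G g (s * u n)) / (u n * g (u n) / G g (u n)) *
          (u n * g (u n) / G g (u n)) ≤ c' / (L - ε) * (L - ε) := by
        apply mul_le_mul hn (hRu n) hRpos.le (by positivity)
      rw [div_mul_cancel₀ _ hRpos.ne'] at h1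
      rw [div_mul_cancel₀ _ hεL.ne'] at h1
      -- f̃ ≤ R(s u n)/s ≤ c'/s
      have h2 : u n * g (s * u n) / G g (lam * u n) ≤ u n * g (s * u n) / G g (s * u n) := by
        apply (div_le_div_iff_of_pos_left (by positivity) hGlu hGsu).2
        exact G_mono hpos hint (by linarith) (by nlinarith [hs.2])
      have h3 : u n * g (s * u n) / G g (s * u n)
          = (s * u n) * g (s * u n) / G g (s * u n) / s := by
        field_simp
      have h4 : (s * u n) * g (s * u n) / G g (s * u n) / s ≤ c' / s :=
        (div_le_div_iff_of_pos_right (by linarith : (0:ℝ) < s)).2 h1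
      calc u n * g (s * u n) / G g (lam * u n) ≤ _ := h2
        _ = _ := h3
        _ ≤ _ := h4
    -- liminf lower bound pointwise
    have hpt : ∀ s ∈ Set.Ioc (1:ℝ) lam,
        ENNReal.ofReal (M - c'/s) ≤ Filter.liminf (fun n => F n s) atTop := by
      intro s hs
      have hevF : ∀ᶠ n in atTop, ENNReal.ofReal (M - c'/s) ≤ F n s := by
        filter_upwards [hptev s hs] with n hn
        exact ENNReal.ofReal_le_ofReal (by linarith)
      calc ENNReal.ofReal (M - c'/s)
          = Filter.liminf (fun _ : ℕ => ENNReal.ofReal (M - c'/s)) atTop :=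
            (Filter.liminf_const _).symm
        _ ≤ Filter.liminf (fun n => F n s) atTop := Filter.liminf_le_liminf hevF
    have hFatou := MeasureTheory.lintegral_liminf_le (μ := volume.restrict (Set.Ioc 1 lam)) (u := atTop)
      hFmeas
    have hmono : ∫⁻ s in Set.Ioc 1 lam, ENNReal.ofReal (M - c'/s) ≤
        ∫⁻ s in Set.Ioc 1 lam, Filter.liminf (fun n => F n s) atTop := by
      apply lintegral_mono_ae
      rw [ae_restrict_iff' measurableSet_Ioc]
      exact ae_of_all _ hpt
    -- value of ∫⁻ F n for large n
    have hvalue : ∀ᶠ n in atTop, ∫⁻ s in Set.Ioc 1 lam, F n s =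
        ENNReal.ofReal (M * (lam - 1) - (G g (lam * u n) - G g (u n)) / G g (lam * u n)) := by
      filter_upwards [hu.eventually (eventually_ge_atTop (max T₀ 2))] with n hn
      have hunT : T₀ ≤ u n := le_trans (le_max_left _ _) hn
      have hun2 : (2:ℝ) ≤ u n := le_trans (le_max_right _ _) hn
      have hu0 : (0:ℝ) < u n := by linarith
      have hGlu : 0 < G g (lam * u n) := G_pos hpos hint (by nlinarith)
      obtain ⟨hIf, hvf⟩ := int_val (x := u n) hpos hint hlam hun2 hGlu
      have hbd : ∀ s ∈ Set.Ioc (1:ℝ) lam,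
          u n * g (s * u n) / G g (lam * u n) ≤ M := by
        intro s hs
        have hs1 : (1:ℝ) < s := hs.1
        have hsu : (2:ℝ) ≤ s * u n := by nlinarith
        have hGsu : 0 < G g (s * u n) := G_pos hpos hint (by linarith)
        have hgsu : 0 < g (s * u n) := hpos _ (by linarith)
        have h2 : u n * g (s * u n) / G g (lam * u n) ≤ u n * g (s * u n) / G g (s * u n) := by
          apply (div_le_div_iff_of_pos_left (by positivity) hGlu hGsu).2
          exact G_mono hpos hint (by linarith) (by nlinarith [hs.2])
        have h3 : u n * g (s * u n) / G g (s * u n)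
            = (s * u n) * g (s * u n) / G g (s * u n) / s := by
          field_simp
        have hRb : (s * u n) * g (s * u n) / G g (s * u n) < M :=
          hT₀ (s * u n) (by nlinarith)
        have h4 : (s * u n) * g (s * u n) / G g (s * u n) / s
            ≤ (s * u n) * g (s * u n) / G g (s * u n) := by
          apply div_le_self (by positivity) hs1.le
        rw [h3] at h2
        linarith
      have hIsub : Integrable (fun s => M - u n * g (s * u n) / G g (lam * u n))
          (volume.restrict (Set.Ioc 1 lam)) := by
        exact (integrable_const M).sub hIf
      have hnnae : 0 ≤ᵐ[volume.restrict (Set.Ioc 1 lam)]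
          fun s => M - u n * g (s * u n) / G g (lam * u n) := by
        rw [EventuallyLE, ae_restrict_iff' measurableSet_Ioc]
        refine ae_of_all _ fun s hs => ?_
        simp only [Pi.zero_apply]
        linarith [hbd s hs]
      rw [← ofReal_integral_eq_lintegral_ofReal hIsub hnnae]
      congr 1
      rw [integral_sub (integrable_const M) hIf, setIntegral_const, hvf,
        Real.volume_real_Ioc_of_le hlam.le, smul_eq_mul]
      ring
    -- liminf of the values
    have hlimI : Filter.liminf (fun n => ∫⁻ s in Set.Ioc 1 lam, F n s) atTop =
        ENNReal.ofReal (M * (lam - 1) - (1 - lam ^ (-L))) := by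
      have ht0 : Tendsto (fun n => M * (lam - 1) -
          (G g (lam * u n) - G g (u n)) / G g (lam * u n)) atTop
          (nhds (M * (lam - 1) - (1 - lam ^ (-L)))) :=
        (tendsto_const_nhds).sub (I_tendsto' hα hpos hint hrv hlam hu hu2)
      have ht : Tendsto (fun n => ∫⁻ s in Set.Ioc 1 lam, F n s) atTop
          (nhds (ENNReal.ofReal (M * (lam - 1) - (1 - lam ^ (-L))))) := by
        apply Tendsto.congr' (hvalue.mono fun n h => h.symm)
        exact (ENNReal.continuous_ofReal.tendsto _).comp ht0
      exact ht.liminf_eq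
    -- lower value
    have hlower : ∫⁻ s in Set.Ioc 1 lam, ENNReal.ofReal (M - c'/s) =
        ENNReal.ofReal (M * (lam - 1) - c' * Real.log lam) := by
      have hcont : ContinuousOn (fun s : ℝ => M - c'/s) (Set.uIcc 1 lam) := by
        apply ContinuousOn.sub continuousOn_const
        apply ContinuousOn.div continuousOn_const continuousOn_id
        intro x hx
        rw [Set.uIcc_of_le hlam.le] at hx
        simp only [id_eq]
        exact ne_of_gt (by linarith [hx.1])
      have hIone' : IntegrableOn (fun s : ℝ => M - c'/s) (Set.Ioc 1 lam) volume :=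
        (intervalIntegrable_iff_integrableOn_Ioc_of_le hlam.le).1 hcont.intervalIntegrable
      have hnn' : 0 ≤ᵐ[volume.restrict (Set.Ioc 1 lam)] fun s : ℝ => M - c'/s := by
        rw [EventuallyLE, ae_restrict_iff' measurableSet_Ioc]
        apply ae_of_all
        intro s hs
        have hs0 : (1:ℝ) < s := hs.1
        have h5 : c'/s ≤ c' := div_le_self hc'0.le hs0.le
        have h6 : c' < M := by rw [hc'def, hMdef]; linarith
        simp only [Pi.zero_apply]
        linarith
      rw [← ofReal_integral_eq_lintegral_ofReal hIone' hnn']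
      congr 1
      rw [← intervalIntegral.integral_of_le hlam.le]
      have hEq : Set.EqOn (fun s : ℝ => M - c'/s) (fun s : ℝ => M - c' * (1/s))
          (Set.uIcc 1 lam) := fun s _ => by ring
      rw [intervalIntegral.integral_congr hEq]
      have hi1 : IntervalIntegrable (fun _ : ℝ => M) volume 1 lam :=
        intervalIntegrable_const
      have hi2 : IntervalIntegrable (fun s : ℝ => c' * (1/s)) volume 1 lam := by
        apply IntervalIntegrable.const_mul
        apply intervalIntegral.intervalIntegrable_one_div (f := fun s : ℝ => s) ?_ continuousOn_id
        intro x hx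
        rw [Set.uIcc_of_le hlam.le] at hx
        exact ne_of_gt (by linarith [hx.1])
      rw [intervalIntegral.integral_sub hi1 hi2, intervalIntegral.integral_const,
        intervalIntegral.integral_const_mul,
        integral_one_div (by
          rw [Set.uIcc_of_le hlam.le]
          intro hmem
          linarith [hmem.1]), div_one, smul_eq_mul]
      ring
    -- chain
    have hrhs_nn : 0 ≤ M * (lam - 1) - (1 - lam ^ (-L)) := by
      have e1 : 1 - lam ^ (-L) ≤ L * Real.log lam := by
        have hexp := Real.add_one_le_exp (-(L * Real.log lam))
        rw [Real.rpow_def_of_pos hlam0]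
        have heq2 : Real.log lam * (-L) = -(L * Real.log lam) := by ring
        rw [heq2]
        linarith
      have e2 : Real.log lam ≤ lam - 1 := Real.log_le_sub_one_of_pos hlam0
      have e3 : L * Real.log lam ≤ L * (lam - 1) :=
        mul_le_mul_of_nonneg_left e2 hL0.le
      have e4 : L * (lam - 1) ≤ M * (lam - 1) := by
        apply mul_le_mul_of_nonneg_right (by rw [hMdef]; linarith) (by linarith)
      linarith
    have hchain : ENNReal.ofReal (M * (lam - 1) - c' * Real.log lam) ≤
        ENNReal.ofReal (M * (lam - 1) - (1 - lam ^ (-L))) := by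
      rw [← hlower, ← hlimI]
      exact le_trans hmono hFatou
    rw [ENNReal.ofReal_le_ofReal_iff hrhs_nn] at hchain
    linarith
  have := ge_of_rpow_bound hc'0.le key
  rw [hc'def] at this
  linarith

end KaramataAux





/-- Karamata's theorem on asymptotic integration (direct half): if `g` is positive on
`[1,∞)`, measurable, locally integrable, and regularly varying with index `α > −1`,
then `x·g(x) / ∫_1^x g(t) dt → α + 1` as `x → ∞`. -/
theorem karamata_direct
    (g : ℝ → ℝ) (α : ℝ) (hα : -1 < α)
    (hpos : ∀ r ≥ (1 : ℝ), 0 < g r)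
    (hmeas : Measurable g)
    (hint : ∀ x ≥ (1 : ℝ), IntervalIntegrable g volume 1 x)
    (hrv : ∀ lam : ℝ, 0 < lam →
      Tendsto (fun r => g (lam * r) / g r) atTop (nhds (lam ^ α))) :
    Tendsto (fun x => x * g x / ∫ t in (1 : ℝ)..x, g t) atTop (nhds (α + 1)) := by
  have hG : (fun x => x * g x / ∫ t in (1 : ℝ)..x, g t)
      = fun x => x * g x / KaramataAux.G g x := rfl
  rw [hG, tendsto_order]
  constructor
  · intro c hc
    have h := KaramataAux.stepB hα hpos hmeas hint hrv (ε := (α + 1) - c) (by linarith)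
    exact h.mono fun x hx => by linarith
  · intro c hc
    have h := KaramataAux.stepA hα hpos hmeas hint hrv (ε := c - (α + 1)) (by linarith)
    exact h.mono fun x hx => by linarith
end

section
/- Let ρ > 0 and let h : [1,∞) → (0,∞) be slowly varying (regularly varying with index 0) and continuous, and define g(r) = r^ρ · h(log r) for large r. Then f(r) := (r / h(log r))^{1/ρ} satisfies g(f(r)) ∼ r as r → ∞, i.e. f is an asymptotic inverse of g. -/
open Filter MeasureTheory

/-- Uniform convergence theorem (light version): if `k` is continuous and
`k (x + d) - k x → 0` for every fixed `d`, then the same holds with drifting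
small shifts. -/
lemma uct_additive (k : ℝ → ℝ) (hk : Continuous k)
    (hpt : ∀ d : ℝ, Tendsto (fun x => k (x + d) - k x) atTop (nhds 0))
    (x c : ℝ → ℝ) (hx : Tendsto x atTop atTop) (hc : Tendsto c atTop (nhds 0)) :
    Tendsto (fun r => k (x r + c r) - k (x r)) atTop (nhds 0) := by
  by_contra hcon
  rw [Metric.tendsto_nhds] at hcon
  push_neg at hcon
  obtain ⟨ε, hε, hfreq⟩ := hcon
  simp only [Real.dist_eq, sub_zero, not_lt] at hfreq
  have hc1 : ∀ᶠ r in atTop, |c r| < 1 := by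
    have := Metric.tendsto_nhds.mp hc 1 one_pos
    simpa [Real.dist_eq] using this
  have key : ∀ n : ℕ, ∃ r, (n : ℝ) ≤ x r ∧ |c r| < 1 ∧
      ε ≤ |k (x r + c r) - k (x r)| := by
    intro n
    have hev : ∀ᶠ r in atTop, (n : ℝ) ≤ x r ∧ |c r| < 1 :=
      (hx.eventually_ge_atTop (n : ℝ)).and hc1
    obtain ⟨r, hr1, hr2⟩ := (hfreq.and_eventually hev).exists
    exact ⟨r, hr2.1, hr2.2, hr1⟩
  choose r hr1 hr2 hr3 using key
  set a : ℕ → ℝ := fun n => x (r n) with ha_def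
  set b : ℕ → ℝ := fun n => c (r n) with hb_def
  have ha : Tendsto a atTop atTop :=
    tendsto_atTop_mono hr1 tendsto_natCast_atTop_atTop
  have hab : Tendsto (fun n => a n + b n) atTop atTop := by
    have hle : ∀ n : ℕ, (n : ℝ) - 1 ≤ a n + b n := by
      intro n
      have h1 := abs_le.mp (hr2 n).le
      have h2 := hr1 n
      simp only [a, b]
      linarith [h1.1]
    have ht : Tendsto (fun n : ℕ => (n : ℝ) - 1) atTop atTop :=
      tendsto_atTop_add_const_right _ _ tendsto_natCast_atTop_atTop
    exact tendsto_atTop_mono hle ht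
  -- the sets
  set T : ℕ → Set ℝ := fun N => Set.Icc (0:ℝ) 4 ∩
    ⋂ (m : ℕ) (_ : N ≤ m), {w | |k (a m + w) - k (a m)| ≤ ε/3 ∧
      |k (a m + b m + w) - k (a m + b m)| ≤ ε/3} with hT_def
  have hmemT : ∀ N w, w ∈ T N ↔ w ∈ Set.Icc (0:ℝ) 4 ∧ ∀ m, N ≤ m →
      |k (a m + w) - k (a m)| ≤ ε/3 ∧ |k (a m + b m + w) - k (a m + b m)| ≤ ε/3 := by
    intro N w
    simp [hT_def, Set.mem_iInter]
  have hclosed : ∀ N, IsClosed (T N) := by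
    intro N
    refine isClosed_Icc.inter (isClosed_iInter fun m => isClosed_iInter fun _ => ?_)
    have c1 : Continuous fun w => |k (a m + w) - k (a m)| :=
      ((hk.comp (continuous_const.add continuous_id)).sub continuous_const).abs
    have c2 : Continuous fun w => |k (a m + b m + w) - k (a m + b m)| :=
      ((hk.comp (continuous_const.add continuous_id)).sub continuous_const).abs
    exact (isClosed_le c1 continuous_const).inter (isClosed_le c2 continuous_const)
  have hmono : Monotone T := by
    intro N N' hNN' w hw
    rw [hmemT] at hw ⊢
    exact ⟨hw.1, fun m hm => hw.2 m (le_trans hNN' hm)⟩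
  have hcover : Set.Icc (0:ℝ) 4 ⊆ ⋃ N, T N := by
    intro w hw
    have h1 : Tendsto (fun m : ℕ => k (a m + w) - k (a m)) atTop (nhds 0) :=
      ((hpt w).comp ha)
    have h2 : Tendsto (fun m : ℕ => k (a m + b m + w) - k (a m + b m)) atTop (nhds 0) :=
      ((hpt w).comp hab)
    have hε3 : (0:ℝ) < ε/3 := by linarith
    have e1 : ∀ᶠ m in atTop, |k (a m + w) - k (a m)| ≤ ε/3 := by
      have := Metric.tendsto_nhds.mp h1 (ε/3) hε3
      filter_upwards [this] with m hm
      rw [Real.dist_eq, sub_zero] at hm; exact hm.le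
    have e2 : ∀ᶠ m in atTop, |k (a m + b m + w) - k (a m + b m)| ≤ ε/3 := by
      have := Metric.tendsto_nhds.mp h2 (ε/3) hε3
      filter_upwards [this] with m hm
      rw [Real.dist_eq, sub_zero] at hm; exact hm.le
    obtain ⟨N, hN⟩ := (e1.and e2).exists_forall_of_atTop
    exact Set.mem_iUnion.mpr ⟨N, (hmemT N w).mpr ⟨hw, fun m hm => hN m hm⟩⟩
  -- measure of union is at least 4
  have hμunion : (ENNReal.ofReal 4) ≤ volume (⋃ N, T N) := by
    calc (ENNReal.ofReal 4) = volume (Set.Icc (0:ℝ) 4) := by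
          rw [Real.volume_Icc]; norm_num
      _ ≤ volume (⋃ N, T N) := measure_mono hcover
  have htend : Tendsto (fun N => volume (T N)) atTop (nhds (volume (⋃ N, T N))) :=
    tendsto_measure_iUnion_atTop hmono
  have hlt : ENNReal.ofReal (15/4) < volume (⋃ N, T N) :=
    lt_of_lt_of_le (by rw [ENNReal.ofReal_lt_ofReal_iff] <;> norm_num) hμunion
  obtain ⟨N, hN⟩ := (htend.eventually (lt_mem_nhds hlt)).exists
  -- translate
  set A := T N with hA_def
  set B := (fun w => w + (- b N)) ⁻¹' A with hB_def
  have hmA : MeasurableSet A := (hclosed N).measurableSet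
  have hmB : MeasurableSet B := hmA.preimage (measurable_id.add_const _)
  have hvB : volume B = volume A := measure_preimage_add_right volume _ _
  have hsubA : A ⊆ Set.Icc (-1:ℝ) 5 := fun w hw => by
    have := ((hmemT N w).mp hw).1
    exact ⟨by linarith [this.1], by linarith [this.2]⟩
  have hsubB : B ⊆ Set.Icc (-1:ℝ) 5 := by
    intro w hw
    have h1 := ((hmemT N _).mp hw).1
    have h2 := abs_le.mp (hr2 N).le
    simp only [Set.mem_Icc] at h1 ⊢
    constructor <;> [linarith [h1.1, h2.1]; linarith [h1.2, h2.2]]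
  have hABne : (A ∩ B).Nonempty := by
    refine nonempty_of_measure_ne_zero (μ := volume) ?_
    intro h0
    have hkey : volume (A ∪ B) + volume (A ∩ B) = volume A + volume B :=
      measure_union_add_inter A hmB
    rw [h0, add_zero, hvB] at hkey
    have hle : volume (A ∪ B) ≤ ENNReal.ofReal 6 := by
      calc volume (A ∪ B) ≤ volume (Set.Icc (-1:ℝ) 5) :=
            measure_mono (Set.union_subset hsubA hsubB)
        _ = ENNReal.ofReal 6 := by rw [Real.volume_Icc]; norm_num
    rw [hkey] at hle
    have : ENNReal.ofReal (15/4) + ENNReal.ofReal (15/4) ≤ ENNReal.ofReal 6 :=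
      le_trans (add_le_add hN.le hN.le) hle
    rw [← ENNReal.ofReal_add (by norm_num) (by norm_num)] at this
    rw [ENNReal.ofReal_le_ofReal_iff (by norm_num)] at this
    norm_num at this
  obtain ⟨w, hwA, hwB⟩ := hABne
  have h1 := (((hmemT N w).mp hwA).2 N le_rfl).1
  have h2 := (((hmemT N _).mp hwB).2 N le_rfl).2
  have heq : a N + b N + (w + -b N) = a N + w := by ring
  rw [heq] at h2
  have h3 := hr3 N
  have : ε ≤ 2 * (ε/3) := by
    calc ε ≤ |k (a N + b N) - k (a N)| := h3
      _ ≤ |k (a N + b N) - k (a N + w)| + |k (a N + w) - k (a N)| := by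
          have := abs_sub_le (k (a N + b N)) (k (a N + w)) (k (a N))
          linarith [this]
      _ ≤ ε/3 + ε/3 := by
          have h2' : |k (a N + b N) - k (a N + w)| ≤ ε/3 := by
            rw [abs_sub_comm]; exact h2
          exact add_le_add h2' h1
      _ = 2 * (ε/3) := by ring
  linarith

/-- A slowly varying positive continuous function has sublinear logarithm. -/
lemma log_sublinear (h : ℝ → ℝ) (hpos : ∀ x, 0 < h x) (hcont : Continuous h)
    (hslow : ∀ lam : ℝ, 0 < lam →
      Tendsto (fun r => h (lam * r) / h r) atTop (nhds 1)) :
    Tendsto (fun t => Real.log (h t) / t) atTop (nhds 0) := by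
  have hE := hslow (Real.exp 1) (Real.exp_pos 1)
  have hev : ∀ᶠ s in atTop, |h (Real.exp 1 * s) / h s - 1| < 1/2 := by
    have := Metric.tendsto_nhds.mp hE (1/2) (by norm_num)
    simpa [Real.dist_eq] using this
  obtain ⟨T₀, hT₀⟩ := hev.exists_forall_of_atTop
  set T : ℝ := max T₀ 1 with hT_def
  have hT1 : (1:ℝ) ≤ T := le_max_right _ _
  have hTpos : (0:ℝ) < T := lt_of_lt_of_le one_pos hT1
  have hstep : ∀ s : ℝ, T ≤ s → |Real.log (h (Real.exp 1 * s)) - Real.log (h s)| ≤ Real.log 2 := by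
    intro s hs
    have hratio := hT₀ s (le_trans (le_max_left _ _) hs)
    have hr1 : (1:ℝ)/2 ≤ h (Real.exp 1 * s) / h s := by
      have := abs_lt.mp hratio; linarith [this.1]
    have hr2 : h (Real.exp 1 * s) / h s ≤ 2 := by
      have := abs_lt.mp hratio; linarith [this.2]
    have heq : Real.log (h (Real.exp 1 * s)) - Real.log (h s) =
        Real.log (h (Real.exp 1 * s) / h s) :=
      (Real.log_div (hpos _).ne' (hpos _).ne').symm
    rw [heq, abs_le]
    constructor
    · have : Real.log (1/2 : ℝ) ≤ Real.log (h (Real.exp 1 * s) / h s) :=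
        Real.log_le_log (by norm_num) hr1
      rw [show (1/2 : ℝ) = 2⁻¹ by norm_num, Real.log_inv] at this
      linarith
    · exact Real.log_le_log (div_pos (hpos _) (hpos _)) hr2 |>.trans_eq rfl
      |>.trans (le_refl _) |>.trans (le_refl _)
  have hlogcont : Continuous fun s => Real.log (h s) :=
    hcont.log fun x => (hpos x).ne'
  obtain ⟨A, hA⟩ : ∃ A : ℝ, ∀ s ∈ Set.Icc T (Real.exp 1 * T), |Real.log (h s)| ≤ A := by
    obtain ⟨C, hC⟩ := isCompact_Icc.exists_bound_of_continuousOn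
      (hlogcont.continuousOn (s := Set.Icc T (Real.exp 1 * T)))
    exact ⟨C, fun s hs => by simpa using hC s hs⟩
  have hind : ∀ n : ℕ, ∀ s ∈ Set.Icc T (Real.exp 1 * T),
      |Real.log (h (Real.exp n * s))| ≤ A + n * Real.log 2 := by
    intro n
    induction n with
    | zero => intro s hs; simpa using hA s hs
    | succ n ih =>
      intro s hs
      have hsT : T ≤ s := hs.1
      have hsn : T ≤ Real.exp n * s := by
        calc T ≤ s := hsT
          _ = 1 * s := (one_mul s).symm
          _ ≤ Real.exp n * s := by
            apply mul_le_mul_of_nonneg_right _ (le_trans hTpos.le hsT)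
            exact Real.one_le_exp (Nat.cast_nonneg n)
      have hst := hstep (Real.exp n * s) hsn
      have hkey : Real.exp ((n:ℝ)+1) * s = Real.exp 1 * (Real.exp n * s) := by
        rw [Real.exp_add]; ring
      have := ih s hs
      calc |Real.log (h (Real.exp ((n:ℕ)+1 : ℕ) * s))|
          = |Real.log (h (Real.exp 1 * (Real.exp n * s)))| := by
            rw [← hkey]; norm_num
        _ ≤ |Real.log (h (Real.exp n * s))| + Real.log 2 := by
            have := abs_sub_abs_le_abs_sub (Real.log (h (Real.exp 1 * (Real.exp n * s))))
              (Real.log (h (Real.exp n * s)))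
            linarith [hst]
        _ ≤ A + n * Real.log 2 + Real.log 2 := by linarith
        _ = A + ((n:ℕ)+1 : ℕ) * Real.log 2 := by push_cast; ring
  have hbound : ∀ u : ℝ, T ≤ u → |Real.log (h u)| ≤ A + Real.log 2 * Real.log u := by
    intro u hu
    have hupos : 0 < u := lt_of_lt_of_le hTpos hu
    have hdiv1 : (1:ℝ) ≤ u / T := (one_le_div hTpos).mpr hu
    have hlognn : 0 ≤ Real.log (u / T) := Real.log_nonneg hdiv1
    set n : ℕ := ⌊Real.log (u / T)⌋₊ with hn_def
    have hn1 : (n : ℝ) ≤ Real.log (u / T) := Nat.floor_le hlognn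
    have hn2 : Real.log (u / T) < (n : ℝ) + 1 := Nat.lt_floor_add_one _
    set s : ℝ := u / Real.exp n with hs_def
    have hs1 : T ≤ s := by
      rw [hs_def, le_div_iff₀ (Real.exp_pos _)]
      have : Real.exp n ≤ u / T := by
        calc Real.exp n ≤ Real.exp (Real.log (u / T)) := Real.exp_le_exp.mpr hn1
          _ = u / T := Real.exp_log (div_pos hupos hTpos)
      calc T * Real.exp n ≤ T * (u / T) := by
            exact mul_le_mul_of_nonneg_left this hTpos.le
        _ = u := by field_simp
    have hs2 : s ≤ Real.exp 1 * T := by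
      rw [hs_def, div_le_iff₀ (Real.exp_pos _)]
      have : u / T ≤ Real.exp ((n:ℝ) + 1) := by
        calc u / T = Real.exp (Real.log (u / T)) := (Real.exp_log (div_pos hupos hTpos)).symm
          _ ≤ Real.exp ((n:ℝ)+1) := Real.exp_le_exp.mpr hn2.le
      calc u = T * (u / T) := by field_simp
        _ ≤ T * Real.exp ((n:ℝ)+1) := mul_le_mul_of_nonneg_left this hTpos.le
        _ = Real.exp 1 * T * Real.exp n := by rw [Real.exp_add]; ring
    have husn : u = Real.exp n * s := by
      rw [hs_def]; field_simp
    have := hind n s ⟨hs1, hs2⟩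
    rw [← husn] at this
    refine le_trans this ?_
    have hlog2 : (0:ℝ) ≤ Real.log 2 := Real.log_nonneg (by norm_num)
    have hlogT : 0 ≤ Real.log T := Real.log_nonneg hT1
    have : Real.log (u / T) = Real.log u - Real.log T :=
      Real.log_div hupos.ne' hTpos.ne'
    nlinarith [hn1]
  -- squeeze
  have hrhs : Tendsto (fun u => (A + Real.log 2 * Real.log u) / u) atTop (nhds 0) := by
    have h1 : Tendsto (fun u : ℝ => A / u) atTop (nhds 0) :=
      tendsto_const_nhds.div_atTop tendsto_id
    have h2 : Tendsto (fun u : ℝ => Real.log 2 * (Real.log u / u)) atTop (nhds 0) := by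
      have := Real.isLittleO_log_id_atTop.tendsto_div_nhds_zero
      simpa using this.const_mul (Real.log 2)
    have := h1.add h2
    rw [add_zero] at this
    refine this.congr (fun u => ?_)
    ring
  refine squeeze_zero_norm' ?_ hrhs
  filter_upwards [eventually_ge_atTop T, eventually_gt_atTop (0:ℝ)] with u hu hu0
  rw [Real.norm_eq_abs, abs_div, abs_of_pos hu0]
  gcongr
  exact hbound u hu

/-- Multiplicative version of the uniform convergence lemma. -/
lemma uct_mult (h : ℝ → ℝ) (hpos : ∀ x, 0 < h x) (hcont : Continuous h)
    (hslow : ∀ lam : ℝ, 0 < lam →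
      Tendsto (fun r => h (lam * r) / h r) atTop (nhds 1))
    (u c : ℝ → ℝ) (hu : Tendsto u atTop atTop) (hc : Tendsto c atTop (nhds 1)) :
    Tendsto (fun r => h (c r * u r) / h (u r)) atTop (nhds 1) := by
  set k : ℝ → ℝ := fun x => Real.log (h (Real.exp x)) with hk_def
  have hkc : Continuous k :=
    (hcont.comp Real.continuous_exp).log fun x => (hpos _).ne'
  have hpt : ∀ d : ℝ, Tendsto (fun x => k (x + d) - k x) atTop (nhds 0) := by
    intro d
    have h1 : Tendsto (fun x => h (Real.exp d * Real.exp x) / h (Real.exp x))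
        atTop (nhds 1) :=
      (hslow (Real.exp d) (Real.exp_pos d)).comp Real.tendsto_exp_atTop
    have h2 : Tendsto (fun x => Real.log (h (Real.exp d * Real.exp x) / h (Real.exp x)))
        atTop (nhds 0) := by
      have := (Real.continuousAt_log one_ne_zero).tendsto.comp h1
      simpa [Function.comp_def] using this
    refine h2.congr fun x => ?_
    rw [Real.log_div (hpos _).ne' (hpos _).ne', hk_def]
    simp only [← Real.exp_add]
    rw [add_comm d x]
  have hlogc : Tendsto (fun r => Real.log (c r)) atTop (nhds 0) := by
    have := (Real.continuousAt_log one_ne_zero).tendsto.comp hc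
    simpa [Function.comp_def] using this
  have main := uct_additive k hkc hpt (fun r => Real.log (u r)) (fun r => Real.log (c r))
    (Real.tendsto_log_atTop.comp hu) hlogc
  have hexp : Tendsto (fun r =>
      Real.exp (k (Real.log (u r) + Real.log (c r)) - k (Real.log (u r)))) atTop (nhds 1) := by
    have := Real.continuous_exp.continuousAt.tendsto.comp main
    simpa [Function.comp_def] using this
  refine hexp.congr' ?_
  filter_upwards [hu.eventually_gt_atTop 0, hc.eventually (eventually_gt_nhds one_pos)]
    with r hur hcr
  have h1 : Real.exp (Real.log (u r) + Real.log (c r)) = c r * u r := by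
    rw [Real.exp_add, Real.exp_log hur, Real.exp_log hcr]; ring
  have h2 : Real.exp (Real.log (u r)) = u r := Real.exp_log hur
  rw [hk_def]
  simp only [h1, h2]
  rw [Real.exp_sub, Real.exp_log (hpos _), Real.exp_log (hpos _)]

/-- Asymptotic inverse of `g(r) = r^ρ · h(log r)` for slowly varying `h`: the
function `f(r) = (r / h(log r))^(1/ρ)` satisfies `g (f r) ∼ r` as `r → ∞`. -/
theorem asymptotic_inverse_power_slow
    (ρ : ℝ) (hρ : 0 < ρ) (h : ℝ → ℝ)
    (hpos : ∀ x, 0 < h x) (hcont : Continuous h)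
    (hslow : ∀ lam : ℝ, 0 < lam →
      Tendsto (fun r => h (lam * r) / h r) atTop (nhds 1))
    (f : ℝ → ℝ)
    (hf : ∀ r, f r = (r / h (Real.log r)) ^ (1 / ρ)) :
    Tendsto (fun r => ((f r) ^ ρ * h (Real.log (f r))) / r) atTop (nhds 1) := by
  have hsub := log_sublinear h hpos hcont hslow
  have htt : Tendsto (fun r : ℝ => Real.log r) atTop atTop := Real.tendsto_log_atTop
  have hρ' : (0:ℝ) < 1/ρ := by positivity
  have hu : Tendsto (fun r => (1/ρ) * Real.log r) atTop atTop :=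
    (tendsto_const_mul_atTop_of_pos hρ').mpr htt
  have hcten : Tendsto (fun r => 1 - Real.log (h (Real.log r)) / Real.log r)
      atTop (nhds 1) := by
    have h0 : Tendsto (fun r => Real.log (h (Real.log r)) / Real.log r) atTop (nhds 0) :=
      hsub.comp htt
    simpa using h0.const_sub 1
  have h1 : Tendsto (fun r =>
      h ((1 - Real.log (h (Real.log r)) / Real.log r) * ((1/ρ) * Real.log r)) /
        h ((1/ρ) * Real.log r)) atTop (nhds 1) :=
    uct_mult h hpos hcont hslow _ _ hu hcten
  have h2 : Tendsto (fun r => h ((1/ρ) * Real.log r) / h (Real.log r)) atTop (nhds 1) :=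
    (hslow (1/ρ) hρ').comp htt
  have h3 := h1.mul h2
  rw [mul_one] at h3
  refine h3.congr' ?_
  filter_upwards [htt.eventually_gt_atTop 0, eventually_gt_atTop (0:ℝ)] with r hlr hr
  have hb : 0 < r / h (Real.log r) := div_pos hr (hpos _)
  have hfr : 0 < f r := by rw [hf]; exact Real.rpow_pos_of_pos hb _
  have hpow : (f r) ^ ρ = r / h (Real.log r) := by
    rw [hf, ← Real.rpow_mul hb.le, one_div_mul_cancel hρ.ne', Real.rpow_one]
  have hlogf : Real.log (f r) = (1/ρ) * (Real.log r - Real.log (h (Real.log r))) := by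
    rw [hf, Real.log_rpow hb, Real.log_div hr.ne' (hpos _).ne']
  have hcmul : (1 - Real.log (h (Real.log r)) / Real.log r) * ((1/ρ) * Real.log r)
      = Real.log (f r) := by
    rw [hlogf]; field_simp
  rw [hcmul, hpow, div_mul_div_cancel₀ (hpos ((1/ρ) * Real.log r)).ne']
  have hh2 : h (Real.log r) ≠ 0 := (hpos _).ne'
  field_simp
end
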